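/- Let T₁, …, Tᵢ be reduction operators relative to (G,<), let ι : syz(T₁,…,T_{i−1}) → syz(T₁,…,Tᵢ) be the map (v₁,…,v_{i−1}) ↦ (v₁,…,v_{i−1},0), and let π̃ : syz(T₁,…,Tᵢ) → syz(U_{i−1}, Tᵢ) be the map (v₁,…,vᵢ) ↦ (v₁+⋯+v_{i−1}, vᵢ), where U_{i−1} = T₁ ∧ ⋯ ∧ T_{i−1}. Then the image of ι equals the kernel of π̃. -/
import Mathlib


open Finsupp

variable {K G : Type*} [Field K] [LinearOrder G] [WellFoundedLT G]

/-- `T` is a reduction operator relative to `(G, <)`. -/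
def IsRedOp (T : (G →₀ K) →ₗ[K] (G →₀ K)) : Prop :=
  T ∘ₗ T = T ∧
    ∀ g : G, T (single g 1) = single g 1 ∨ (T (single g 1)).support.max < (g : WithBot G)

/-- The set of syzygies for the family `T₁, …, T_k`: tuples `(v₁, …, v_k)` with
`v_j ∈ ker T_j` and `v₁ + ⋯ + v_k = 0`. -/
def SyzSet {K G : Type*} [Field K] [LinearOrder G] {k : ℕ}
    (T : Fin k → (G →₀ K) →ₗ[K] (G →₀ K)) : Set (Fin k → (G →₀ K)) :=
  {v | (∀ j, T j (v j) = 0) ∧ ∑ j, v j = 0}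

/-- The image of `ι : syz(T₁,…,T_{i-1}) → syz(T₁,…,Tᵢ)` (appending a zero last coordinate)
is exactly the kernel of `π̃ : syz(T₁,…,Tᵢ) → syz(U_{i-1}, Tᵢ)`,
`(v₁,…,vᵢ) ↦ (v₁+⋯+v_{i-1}, vᵢ)`. -/
theorem image_iota_eq_ker_pi (n : ℕ) (T : Fin (n + 1) → (G →₀ K) →ₗ[K] (G →₀ K))
    (hT : ∀ i, IsRedOp (T i)) :
    (fun v : Fin n → (G →₀ K) => Fin.snoc v 0) ''
        SyzSet (fun j : Fin n => T j.castSucc) =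
      {v ∈ SyzSet T | (∑ j : Fin n, v j.castSucc) = 0 ∧ v (Fin.last n) = 0} := by
  ext w
  constructor
  · rintro ⟨v, ⟨hker, hsum⟩, rfl⟩
    refine ⟨⟨fun j => ?_, ?_⟩, ?_, by simp⟩
    · refine Fin.lastCases ?_ ?_ j <;> simp [hker]
    · rw [Fin.sum_univ_castSucc]; simpa using hsum
    · simpa using hsum
  · rintro ⟨⟨hker, -⟩, hsum, hlast⟩
    refine ⟨fun j => w j.castSucc, ⟨fun j => hker j.castSucc, hsum⟩, ?_⟩
    funext j
    refine Fin.lastCases ?_ ?_ j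
    · simpa using hlast.symm
    · simp
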